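/- Let a, b ∈ ℝ with b > 0, let 𝔞(k) (k ≥ 1) and 𝔟(k) > 0 (k ≥ 0) be real, let c : ℕ → ℂ with c(k) ≠ 0 and 𝔟(k−1)·c(k−1) = b·c(k) for all k ≥ 1, and let complex coefficients a(k,m) (m ≥ k ≥ 0) satisfy a(k,k) = 1 and, for some ρ > 1, ∑_{m ≥ k} |a(k,m)|·ρ^m < ∞ for every k. Define e(k,θ) = c(k)·∑_{m ≥ k} a(k,m)·θ^m, and assume that for every θ with 0 < |θ| < ρ and every k ≥ 1, −𝔟(k−1)e(k−1,θ) + 𝔞(k)e(k,θ) − 𝔟(k)e(k+1,θ) = (a − b(θ + θ⁻¹))·e(k,θ). Then for every k ≥ 1: (𝔞(k) − a)/b = a(k−1,k) − a(k,k+1), and 𝔟(k)²/b² = ((𝔞(k) − a)/b)·a(k,k+1) + a(k,k+2) − a(k−1,k+1) + 1. -/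

import Mathlib

open Complex

lemma jost_head_zero (d : ℕ → ℂ) (hd : Summable fun n => ‖d n‖)
    (h : ∀ θ : ℂ, 0 < ‖θ‖ → ‖θ‖ < 1 → ∑' n, d n * θ ^ n = 0) : d 0 = 0 := by
  have hd' : Summable fun n => ‖d (n + 1)‖ := (summable_nat_add_iff (f := fun n => ‖d n‖) 1).2 hd
  set C : ℝ := ∑' n, ‖d (n + 1)‖ with hC
  have hbound : ∀ t : ℝ, 0 < t → t < 1 → ‖d 0‖ ≤ t * C := by
    intro t ht0 ht1
    set θ : ℂ := (t : ℂ) with hθ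
    have hθn : ‖θ‖ = t := by
      simp [hθ, Complex.norm_real, abs_of_pos ht0]
    have hpowle : ∀ n : ℕ, ‖d n * θ ^ n‖ ≤ ‖d n‖ := by
      intro n
      rw [norm_mul, norm_pow, hθn]
      calc ‖d n‖ * t ^ n ≤ ‖d n‖ * 1 :=
            mul_le_mul_of_nonneg_left (pow_le_one₀ ht0.le ht1.le) (norm_nonneg _)
        _ = ‖d n‖ := mul_one _
    have hsum : Summable fun n => d n * θ ^ n :=
      Summable.of_norm_bounded hd hpowle
    have h0 := h θ (by rw [hθn]; exact ht0) (by rw [hθn]; exact ht1)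
    rw [Summable.tsum_eq_zero_add hsum] at h0
    simp only [pow_zero, mul_one] at h0
    have hd0 : d 0 = -∑' n, d (n + 1) * θ ^ (n + 1) :=
      by linear_combination h0
    have hsum1 : Summable fun n => d (n + 1) * θ ^ (n + 1) :=
      (summable_nat_add_iff (f := fun n => d n * θ ^ n) 1).2 hsum
    calc ‖d 0‖ = ‖∑' n, d (n + 1) * θ ^ (n + 1)‖ := by rw [hd0, norm_neg]
      _ ≤ ∑' n, ‖d (n + 1) * θ ^ (n + 1)‖ := norm_tsum_le_tsum_norm hsum1.norm
      _ ≤ ∑' n, t * ‖d (n + 1)‖ := by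
          apply Summable.tsum_le_tsum _ hsum1.norm (hd'.mul_left t)
          intro n
          rw [norm_mul, norm_pow, hθn, mul_comm]
          apply mul_le_mul_of_nonneg_right _ (norm_nonneg _)
          calc t ^ (n + 1) ≤ t ^ 1 :=
                pow_le_pow_of_le_one ht0.le ht1.le (Nat.le_add_left 1 n)
            _ = t := pow_one t
      _ = t * C := tsum_mul_left
  have hC0 : 0 ≤ C := tsum_nonneg fun n => norm_nonneg _
  have : ‖d 0‖ ≤ 0 := by
    have hlim : Filter.Tendsto (fun t : ℝ => t * C) (nhdsWithin 0 (Set.Ioi 0)) (nhds 0) := by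
      have : Filter.Tendsto (fun t : ℝ => t * C) (nhds 0) (nhds (0 * C)) :=
        (continuous_id.mul continuous_const).tendsto 0
      rw [zero_mul] at this
      exact this.mono_left nhdsWithin_le_nhds
    apply ge_of_tendsto hlim
    filter_upwards [Ioo_mem_nhdsGT_of_mem (by norm_num : (0:ℝ) ∈ Set.Ico 0 1)] with t ht
    exact hbound t ht.1 ht.2
  simpa using le_antisymm this (norm_nonneg _)

lemma jost_coeff_zero : ∀ (n : ℕ) (d : ℕ → ℂ), (Summable fun m => ‖d m‖) →
    (∀ θ : ℂ, 0 < ‖θ‖ → ‖θ‖ < 1 → ∑' m, d m * θ ^ m = 0) → d n = 0 := by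
  intro n
  induction n with
  | zero => exact fun d hd h => jost_head_zero d hd h
  | succ n ih =>
    intro d hd h
    have h0 : d 0 = 0 := jost_head_zero d hd h
    refine ih (fun m => d (m + 1)) ((summable_nat_add_iff (f := fun m => ‖d m‖) 1).2 hd) ?_
    intro θ hθ0 hθ1
    have hθne : θ ≠ 0 := by
      intro hz; rw [hz, norm_zero] at hθ0; exact lt_irrefl 0 hθ0
    have hsum : Summable fun m => d m * θ ^ m := by
      apply Summable.of_norm_bounded hd
      intro m
      rw [norm_mul, norm_pow]
      calc ‖d m‖ * ‖θ‖ ^ m ≤ ‖d m‖ * 1 :=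
            mul_le_mul_of_nonneg_left (pow_le_one₀ (norm_nonneg θ) hθ1.le) (norm_nonneg _)
        _ = ‖d m‖ := mul_one _
    have h1 := h θ hθ0 hθ1
    rw [Summable.tsum_eq_zero_add hsum] at h1
    simp only [pow_zero, mul_one, h0, zero_add] at h1
    have h2 : ∑' m, d (m + 1) * θ ^ (m + 1) = θ * ∑' m, d (m + 1) * θ ^ m := by
      rw [← tsum_mul_left]
      exact tsum_congr fun m => by ring
    rw [h2] at h1
    exact (mul_eq_zero.1 h1).resolve_left hθne

lemma jost_three (P Q R : ℕ → ℂ)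
    (hP : Summable fun n => ‖P n‖) (hQ : Summable fun n => ‖Q n‖)
    (hR : Summable fun n => ‖R n‖)
    (key : ∀ θ : ℂ, 0 < ‖θ‖ → ‖θ‖ < 1 →
      (∑' n, P n * θ ^ n) + θ * (∑' n, Q n * θ ^ n) + θ ^ 2 * (∑' n, R n * θ ^ n) = 0) :
    ∀ n, P (n + 2) + Q (n + 1) + R n = 0 := by
  set v : ℕ → ℂ := fun n => Nat.rec (motive := fun _ => ℂ) 0 (fun m _ => Q m) n with hv
  set w : ℕ → ℂ := fun n => Nat.rec (motive := fun _ => ℂ) 0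
    (fun m _ => Nat.rec (motive := fun _ => ℂ) 0 (fun l _ => R l) m) n with hw
  have hv0 : v 0 = 0 := rfl
  have hvs : ∀ m, v (m + 1) = Q m := fun m => rfl
  have hw0 : w 0 = 0 := rfl
  have hw1 : w 1 = 0 := rfl
  have hws : ∀ m, w (m + 2) = R m := fun m => rfl
  set D : ℕ → ℂ := fun n => P n + v n + w n with hD
  have hvnorm : Summable fun n => ‖v n‖ :=
    (summable_nat_add_iff (f := fun n => ‖v n‖) 1).1
      (hQ.congr fun n => (congrArg norm (hvs n)).symm)
  have hwnorm : Summable fun n => ‖w n‖ :=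
    (summable_nat_add_iff (f := fun n => ‖w n‖) 2).1
      (hR.congr fun n => (congrArg norm (hws n)).symm)
  have hDnorm : Summable fun n => ‖D n‖ := by
    apply Summable.of_nonneg_of_le (fun n => norm_nonneg _) _ ((hP.add hvnorm).add hwnorm)
    intro n
    exact (norm_add_le _ _).trans (add_le_add_left (norm_add_le _ _) _)
  have hDzero : ∀ n, D n = 0 := by
    intro n
    apply jost_coeff_zero n D hDnorm
    intro θ hθ0 hθ1
    have hb : ∀ (f : ℕ → ℂ), (Summable fun n => ‖f n‖) → Summable fun n => f n * θ ^ n := by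
      intro f hf
      apply Summable.of_norm_bounded hf
      intro n
      rw [norm_mul, norm_pow]
      calc ‖f n‖ * ‖θ‖ ^ n ≤ ‖f n‖ * 1 :=
            mul_le_mul_of_nonneg_left (pow_le_one₀ (norm_nonneg θ) hθ1.le) (norm_nonneg _)
        _ = ‖f n‖ := mul_one _
    have hPs := hb P hP
    have hQs := hb Q hQ
    have hRs := hb R hR
    have hvsm := hb v hvnorm
    have hwsm := hb w hwnorm
    have hvt : ∑' n, v n * θ ^ n = θ * ∑' n, Q n * θ ^ n := by
      rw [Summable.tsum_eq_zero_add hvsm]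
      simp only [hv0, pow_zero, zero_mul, zero_add]
      calc (∑' n, v (n + 1) * θ ^ (n + 1)) = ∑' n, θ * (Q n * θ ^ n) :=
            tsum_congr fun n => by rw [hvs]; ring
        _ = θ * ∑' n, Q n * θ ^ n := tsum_mul_left
    have hwsm1 : Summable fun n => w (n + 1) * θ ^ (n + 1) :=
      (summable_nat_add_iff (f := fun n => w n * θ ^ n) 1).2 hwsm
    have hwt : ∑' n, w n * θ ^ n = θ ^ 2 * ∑' n, R n * θ ^ n := by
      rw [Summable.tsum_eq_zero_add hwsm]
      simp only [hw0, pow_zero, zero_mul, zero_add]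
      rw [Summable.tsum_eq_zero_add hwsm1]
      simp only [hw1, pow_one, zero_mul, zero_add]
      calc (∑' n, w (n + 1 + 1) * θ ^ (n + 1 + 1)) = ∑' n, θ ^ 2 * (R n * θ ^ n) :=
            tsum_congr fun n => by rw [hws]; ring
        _ = θ ^ 2 * ∑' n, R n * θ ^ n := tsum_mul_left
    calc (∑' n, D n * θ ^ n)
        = ∑' n, (P n * θ ^ n + v n * θ ^ n + w n * θ ^ n) :=
          tsum_congr fun n => by simp only [hD]; ring
      _ = (∑' n, P n * θ ^ n) + (∑' n, v n * θ ^ n) + ∑' n, w n * θ ^ n := by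
          rw [Summable.tsum_add (hPs.add hvsm) hwsm, Summable.tsum_add hPs hvsm]
      _ = (∑' n, P n * θ ^ n) + θ * (∑' n, Q n * θ ^ n)
            + θ ^ 2 * ∑' n, R n * θ ^ n := by rw [hvt, hwt]
      _ = 0 := key θ hθ0 hθ1
  intro n
  have := hDzero (n + 2)
  rw [hD] at this
  simpa [hvs, hws] using this

theorem coefficients_from_jost_series
    (a b : ℝ) (hb : 0 < b)
    (𝔞 𝔟 : ℕ → ℝ) (h𝔟 : ∀ k, 0 < 𝔟 k)
    (c : ℕ → ℂ) (hc0 : ∀ k, c k ≠ 0) (hc : ∀ k : ℕ, (𝔟 k : ℂ) * c k = (b : ℂ) * c (k + 1))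
    (A : ℕ → ℕ → ℂ) (hAdiag : ∀ k, A k k = 1) (hAzero : ∀ k m, m < k → A k m = 0)
    (ρ : ℝ) (hρ : 1 < ρ)
    (hAsum : ∀ k, Summable fun m : ℕ => ‖A k m‖ * ρ ^ m)
    (e : ℕ → ℂ → ℂ) (he : ∀ k θ, e k θ = c k * ∑' m : ℕ, A k m * θ ^ m)
    (heq : ∀ θ : ℂ, 0 < ‖θ‖ → ‖θ‖ < ρ → ∀ k : ℕ,
      -(𝔟 k : ℂ) * e k θ + (𝔞 (k + 1) : ℂ) * e (k + 1) θ - (𝔟 (k + 1) : ℂ) * e (k + 2) θ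
        = ((a : ℂ) - (b : ℂ) * (θ + θ⁻¹)) * e (k + 1) θ) :
    ∀ k : ℕ,
      (((𝔞 (k + 1) - a) / b : ℝ) : ℂ) = A k (k + 1) - A (k + 1) (k + 2) ∧
      (((𝔟 (k + 1)) ^ 2 / b ^ 2 : ℝ) : ℂ)
        = (((𝔞 (k + 1) - a) / b : ℝ) : ℂ) * A (k + 1) (k + 2)
          + A (k + 1) (k + 3) - A k (k + 2) + 1 := by
  have bne : (b : ℂ) ≠ 0 := by
    exact_mod_cast hb.ne'
  have habs : ∀ j, Summable fun m => ‖A j m‖ := by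
    intro j
    apply Summable.of_nonneg_of_le (fun m => norm_nonneg _) _ (hAsum j)
    intro m
    exact le_mul_of_one_le_right (norm_nonneg _) (one_le_pow₀ hρ.le)
  have hS : ∀ (j : ℕ) (θ : ℂ), ‖θ‖ < 1 → Summable fun m => A j m * θ ^ m := by
    intro j θ hθ
    apply Summable.of_norm_bounded (habs j)
    intro m
    rw [norm_mul, norm_pow]
    calc ‖A j m‖ * ‖θ‖ ^ m ≤ ‖A j m‖ * 1 :=
          mul_le_mul_of_nonneg_left (pow_le_one₀ (norm_nonneg θ) hθ.le) (norm_nonneg _)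
      _ = ‖A j m‖ := mul_one _
  intro k
  set α : ℂ := (b : ℂ) * ((𝔞 (k + 1) : ℂ) - (a : ℂ)) with hα
  set β : ℂ := ((𝔟 (k + 1) : ℝ) : ℂ) ^ 2 with hβ
  set P : ℕ → ℂ := fun n => (b : ℂ) ^ 2 * A (k + 1) n with hP
  set Q : ℕ → ℂ := fun m =>
    -(b : ℂ) ^ 2 * A k m + α * A (k + 1) m - β * A (k + 2) m with hQ
  have hPnorm : Summable fun n => ‖P n‖ :=
    ((habs (k + 1)).mul_left ‖((b : ℂ) ^ 2)‖).congr fun n => (norm_mul _ _).symm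
  have s1 : Summable fun n => ‖-(b : ℂ) ^ 2 * A k n‖ :=
    ((habs k).mul_left ‖(-(b : ℂ) ^ 2)‖).congr fun n => (norm_mul _ _).symm
  have s2 : Summable fun n => ‖α * A (k + 1) n‖ :=
    ((habs (k + 1)).mul_left ‖α‖).congr fun n => (norm_mul _ _).symm
  have s3 : Summable fun n => ‖β * A (k + 2) n‖ :=
    ((habs (k + 2)).mul_left ‖β‖).congr fun n => (norm_mul _ _).symm
  have hQnorm : Summable fun n => ‖Q n‖ := by
    apply Summable.of_nonneg_of_le (fun n => norm_nonneg _) _ ((s1.add s2).add s3)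
    intro n
    calc ‖Q n‖ ≤ ‖-(b : ℂ) ^ 2 * A k n + α * A (k + 1) n‖ + ‖β * A (k + 2) n‖ :=
          norm_sub_le _ _
      _ ≤ ‖-(b : ℂ) ^ 2 * A k n‖ + ‖α * A (k + 1) n‖ + ‖β * A (k + 2) n‖ :=
          add_le_add_left (norm_add_le _ _) _
  have key : ∀ θ : ℂ, 0 < ‖θ‖ → ‖θ‖ < 1 →
      (∑' n, P n * θ ^ n) + θ * (∑' n, Q n * θ ^ n) + θ ^ 2 * (∑' n, P n * θ ^ n) = 0 := by
    intro θ hθ0 hθ1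
    have hθne : θ ≠ 0 := by
      intro hz; rw [hz, norm_zero] at hθ0; exact lt_irrefl 0 hθ0
    have hinv : θ * θ⁻¹ = 1 := mul_inv_cancel₀ hθne
    have Hk := heq θ hθ0 (by linarith) k
    simp only [he] at Hk
    set X : ℂ := ∑' m, A k m * θ ^ m with hX
    set Y : ℂ := ∑' m, A (k + 1) m * θ ^ m with hY
    set Z : ℂ := ∑' m, A (k + 2) m * θ ^ m with hZ
    have h1 := (hS k θ hθ1).mul_left (-(b : ℂ) ^ 2)
    have h2 := (hS (k + 1) θ hθ1).mul_left α
    have h3 := (hS (k + 2) θ hθ1).mul_left β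
    have hQt : (∑' m, Q m * θ ^ m) = -(b : ℂ) ^ 2 * X + α * Y - β * Z := by
      calc (∑' m, Q m * θ ^ m)
          = ∑' m, (-(b : ℂ) ^ 2 * (A k m * θ ^ m) + α * (A (k + 1) m * θ ^ m)
              - β * (A (k + 2) m * θ ^ m)) := tsum_congr fun m => by simp only [hQ]; ring
        _ = -(b : ℂ) ^ 2 * X + α * Y - β * Z := by
            rw [Summable.tsum_sub (h1.add h2) h3, Summable.tsum_add h1 h2, tsum_mul_left, tsum_mul_left,
              tsum_mul_left]
    have hPt : (∑' n, P n * θ ^ n) = (b : ℂ) ^ 2 * Y := by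
      calc (∑' n, P n * θ ^ n) = ∑' n, (b : ℂ) ^ 2 * (A (k + 1) n * θ ^ n) :=
            tsum_congr fun n => by simp only [hP]; ring
        _ = (b : ℂ) ^ 2 * Y := tsum_mul_left
    rw [hPt, hQt]
    have hG : c (k + 1) * ((b : ℂ) ^ 2 * Y + θ * (-(b : ℂ) ^ 2 * X + α * Y - β * Z)
        + θ ^ 2 * ((b : ℂ) ^ 2 * Y)) = 0 := by
      rw [hα, hβ]
      linear_combination (θ * (b : ℂ)) * Hk + (θ * (b : ℂ) * X) * (hc k)
        - (θ * ((𝔟 (k + 1) : ℝ) : ℂ) * Z) * (hc (k + 1))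
        - ((b : ℂ) ^ 2 * c (k + 1) * Y) * hinv
    exact (mul_eq_zero.1 hG).resolve_left (hc0 (k + 1))
  have hcon := jost_three P Q P hPnorm hQnorm hPnorm key
  have e1 := hcon k
  have e2 := hcon (k + 1)
  simp only [hP, hQ, hAdiag, hAzero k (k + 1)] at e1 e2
  rw [hAzero (k + 1) k (Nat.lt_succ_self k), hAzero (k + 2) (k + 1) (Nat.lt_succ_self _)] at e1
  simp only [show k + 1 + 1 = k + 2 from rfl, show k + 1 + 2 = k + 3 from rfl] at e2
  simp only [hα, hβ] at e1 e2
  have eq1 : (((𝔞 (k + 1) - a) / b : ℝ) : ℂ) = A k (k + 1) - A (k + 1) (k + 2) := by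
    push_cast
    rw [div_eq_iff bne]
    apply mul_left_cancel₀ bne
    linear_combination e1
  refine ⟨eq1, ?_⟩
  rw [eq1]
  push_cast
  rw [div_eq_iff (pow_ne_zero 2 bne)]
  linear_combination -e2 + A (k + 1) (k + 2) * e1
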